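/- The function f(k) = k^2 [ (1+1/k) ln(1+1/k) - 1/k ], defined for k in (1, ∞), is strictly increasing. -/

import Mathlib

noncomputable def f (k : ℝ) : ℝ := k^2 * ((1 + 1/k) * Real.log (1 + 1/k) - 1/k)

open Real Set

lemma key_log_ineq {t : ℝ} (ht : 1 < t) : 2*(t-1)/(t+1) < Real.log t := by
  have h : StrictMonoOn (fun s => Real.log s - 2*(s-1)/(s+1)) (Ici 1) := by
    apply strictMonoOn_of_deriv_pos (convex_Ici 1)
    · apply ContinuousOn.sub
      · exact fun x hx => (Real.continuousAt_log (by
          have := mem_Ici.mp hx; linarith)).continuousWithinAt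
      · apply ContinuousOn.div
        · fun_prop
        · fun_prop
        · intro x hx; have := mem_Ici.mp hx; intro h; linarith
    · intro x hx
      rw [interior_Ici] at hx
      have hx1 : (1:ℝ) < x := hx
      have hx0 : x ≠ 0 := by linarith
      have hx1' : x + 1 ≠ 0 := by linarith
      have hd : HasDerivAt (fun s => Real.log s - 2*(s-1)/(s+1)) (1/x - 4/(x+1)^2) x := by
        have h1 : HasDerivAt Real.log (1/x) x := by
          simpa [one_div] using Real.hasDerivAt_log hx0
        have h2 : HasDerivAt (fun s : ℝ => 2*(s-1)/(s+1)) (4/(x+1)^2) x := by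
          have hn : HasDerivAt (fun s : ℝ => 2*(s-1)) 2 x := by
            simpa using ((hasDerivAt_id x).sub_const 1).const_mul 2
          have hdd : HasDerivAt (fun s : ℝ => s+1) 1 x := (hasDerivAt_id x).add_const 1
          have := hn.div hdd hx1'
          refine this.congr_deriv ?_
          ring
        exact h1.sub h2
      rw [hd.deriv]
      have heq : 1/x - 4/(x+1)^2 = (x-1)^2/(x*(x+1)^2) := by
        field_simp; ring
      rw [heq]
      have hxpos : 0 < x := by linarith
      have hne : x - 1 ≠ 0 := by intro h; linarith
      positivity
  have h1 : (1:ℝ) ∈ Ici (1:ℝ) := by simp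
  have h2 : t ∈ Ici (1:ℝ) := le_of_lt ht
  have := h h1 h2 ht
  simp only [Real.log_one] at this
  have e1 : 2*((1:ℝ)-1)/((1:ℝ)+1) = 0 := by norm_num
  rw [e1] at this
  linarith

theorem f_strictMonoOn : StrictMonoOn f (Set.Ioi (1 : ℝ)) := by
  have hderiv : ∀ x ∈ Ioi (1:ℝ), HasDerivAt f ((2*x+1)*Real.log (1+1/x) - 2) x := by
    intro x hx
    have hx1 : (1:ℝ) < x := hx
    have hx0 : (0:ℝ) < x := by linarith
    have hx0' : x ≠ 0 := ne_of_gt hx0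
    have hs : 0 < 1 + 1/x := by positivity
    have hlog : HasDerivAt (fun k : ℝ => Real.log (1 + 1/k))
        ((1+1/x)⁻¹ * (-(1/x^2))) x := by
      have hinner : HasDerivAt (fun k : ℝ => 1 + 1/k) (-(1/x^2)) x := by
        simpa [one_div] using ((hasDerivAt_inv hx0').const_add 1)
      exact (Real.hasDerivAt_log (ne_of_gt hs)).comp x hinner
    have hpoly : HasDerivAt (fun k : ℝ => k^2 + k) (2*x + 1) x := by
      exact ((hasDerivAt_pow 2 x).add (hasDerivAt_id x)).congr_deriv (by simp)
    have hg : HasDerivAt (fun k : ℝ => (k^2 + k) * Real.log (1 + 1/k) - k)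
        ((2*x+1)*Real.log (1+1/x) - 2) x := by
      have := (hpoly.mul hlog).sub (hasDerivAt_id x)
      refine this.congr_deriv ?_
      have h2 : (x^2 + x) * ((1+1/x)⁻¹ * (-(1/x^2))) = -1 := by
        field_simp
      rw [mul_comm ((2:ℝ)*x+1) (Real.log (1+1/x))]
      linarith [h2]
    have heq : f =ᶠ[nhds x] (fun k : ℝ => (k^2 + k) * Real.log (1 + 1/k) - k) := by
      filter_upwards [isOpen_Ioi.mem_nhds (mem_Ioi.mpr hx0)] with k hk
      have hk0 : k ≠ 0 := ne_of_gt (mem_Ioi.mp hk)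
      simp only [f]
      field_simp
    exact hg.congr_of_eventuallyEq heq
  apply strictMonoOn_of_deriv_pos (convex_Ioi 1)
  · exact fun x hx => (hderiv x hx).continuousAt.continuousWithinAt
  · intro x hx
    rw [interior_Ioi] at hx
    rw [(hderiv x hx).deriv]
    have hx1 : (1:ℝ) < x := hx
    have hx0 : (0:ℝ) < x := by linarith
    have ht : 1 < 1 + 1/x := by
      have : 0 < 1/x := by positivity
      linarith
    have hk := key_log_ineq ht
    have e : 2*((1+1/x)-1)/((1+1/x)+1) = 2/(2*x+1) := by
      field_simp
      ring
    rw [e] at hk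
    have h2x : (0:ℝ) < 2*x+1 := by linarith
    rw [div_lt_iff₀ h2x] at hk
    nlinarith [hk]
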